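/- The divisibility relation { (m, n) ∈ ℕ² : m ∣ n } is not a semilinear subset of ℕ². -/

import Mathlib

def IsLinear2 (S : Set (ℕ × ℕ)) : Prop :=
  ∃ (base : ℕ × ℕ) (ps : List (ℕ × ℕ)),
    S = { x | ∃ c : Fin ps.length → ℕ, x = base + ∑ i, c i • ps.get i }

def IsSemilinear2 (S : Set (ℕ × ℕ)) : Prop :=
  ∃ (n : ℕ) (L : Fin n → Set (ℕ × ℕ)), (∀ i, IsLinear2 (L i)) ∧ S = ⋃ i, L i

theorem stmt_12 : ¬ IsSemilinear2 { p : ℕ × ℕ | p.1 ∣ p.2 } := by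
  rintro ⟨N, L, hlin, hU⟩
  have hz : ∀ n : ℕ, ((n, n * n) : ℕ × ℕ) ∈ ⋃ i, L i := by
    intro n
    rw [← hU]
    exact Dvd.intro n rfl
  have hsub : ∀ i, L i ⊆ { p : ℕ × ℕ | p.1 ∣ p.2 } := by
    intro i
    rw [hU]
    exact Set.subset_iUnion L i
  have hinf : ∃ i, {n : ℕ | ((n, n * n) : ℕ × ℕ) ∈ L i}.Infinite := by
    by_contra h
    push_neg at h
    have hfin : (Set.univ : Set ℕ).Finite := by
      apply Set.Finite.subset (Set.finite_iUnion h)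
      intro n _
      have := hz n
      rw [Set.mem_iUnion] at this
      obtain ⟨i, hi⟩ := this
      exact Set.mem_iUnion.mpr ⟨i, hi⟩
    exact Set.infinite_univ hfin
  obtain ⟨i, hT⟩ := hinf
  obtain ⟨b, ps, hL⟩ := hlin i
  set M : ℕ := (ps.map Prod.snd).sum with hM
  -- pick a large n with (n, n*n) ∈ L i
  obtain ⟨n, hnT, hn⟩ := hT.exists_gt (b.2 + M)
  have hn1 : 1 ≤ n := by omega
  have hmem : ((n, n * n) : ℕ × ℕ) ∈ L i := hnT
  rw [hL] at hmem
  obtain ⟨c, hc⟩ := hmem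
  -- every list entry's snd is ≤ M
  have hleM : ∀ j : Fin ps.length, (ps.get j).2 ≤ M := by
    intro j
    apply List.single_le_sum (by intro x _; exact Nat.zero_le x)
    exact List.mem_map_of_mem (f := Prod.snd) (List.get_mem ps j)
  -- Step A: periods with zero first component have zero second component
  have hA : ∀ j : Fin ps.length, (ps.get j).1 = 0 → (ps.get j).2 = 0 := by
    intro j hj
    by_contra hne
    -- bump the j-th coefficient
    have hmem' : b + ∑ k, (fun k => c k + if k = j then 1 else 0) k • ps.get k ∈ L i := by
      rw [hL]
      exact ⟨_, rfl⟩
    have hsum : (∑ k, (fun k => c k + if k = j then 1 else 0) k • ps.get k)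
        = (∑ k, c k • ps.get k) + ps.get j := by
      simp only [add_smul, Finset.sum_add_distrib]
      congr 1
      rw [Finset.sum_congr rfl (fun k _ => by
        rw [ite_smul, one_smul, zero_smul])]
      simp
    rw [hsum, ← add_assoc, ← hc] at hmem'
    have hdvd := hsub i hmem'
    simp only [Set.mem_setOf_eq, Prod.fst_add, Prod.snd_add, hj, add_zero] at hdvd
    have : n ∣ (ps.get j).2 := (Nat.dvd_add_right ⟨n, rfl⟩).mp hdvd
    have := Nat.le_of_dvd (Nat.pos_of_ne_zero hne) this
    have := hleM j
    omega
  -- coordinates of the witness equation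
  have h1 : n = b.1 + ∑ k, c k * (ps.get k).1 := by
    have := congrArg Prod.fst hc
    simpa [Prod.fst_sum] using this
  have h2 : n * n = b.2 + ∑ k, c k * (ps.get k).2 := by
    have := congrArg Prod.snd hc
    simpa [Prod.snd_sum] using this
  -- Step B: quadratic vs linear growth
  have hbound : (∑ k, c k * (ps.get k).2) ≤ M * ∑ k, c k * (ps.get k).1 := by
    rw [Finset.mul_sum]
    apply Finset.sum_le_sum
    intro k _
    rcases Nat.eq_zero_or_pos (ps.get k).1 with h0 | hpos
    · rw [hA k h0]
      simp
    · calc c k * (ps.get k).2 ≤ c k * M := Nat.mul_le_mul_left _ (hleM k)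
        _ ≤ M * (c k * (ps.get k).1) := by
            rw [mul_comm (c k) M, mul_comm (c k) _]
            exact Nat.mul_le_mul_left M (Nat.le_mul_of_pos_left _ hpos)
  have hS1 : (∑ k, c k * (ps.get k).1) ≤ n := by omega
  have hquad : n * n ≤ b.2 + M * n :=
    h2 ▸ Nat.add_le_add_left (le_trans hbound (Nat.mul_le_mul_left M hS1)) b.2
  have : n * (b.2 + M + 1) ≤ n * n := Nat.mul_le_mul_left n (by omega)
  nlinarith
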